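/- Let D ≥ 1 and n ≥ D be integers, ℓ: ℝ^D → [0, B_ℓ] a bounded measurable loss, and f: ℝ^D → ℝ^D a measurable bijection with measurable inverse. For an i.i.d. sample S₁, …, S_n from a factorized distribution q on ℝ^D, let Ř = n^{−D} Σ_{(i₁,…,i_D) ∈ [n]^D} ℓ(f(S_{i₁}^{(1)}, …, S_{i_D}^{(D)})) be the cross-combination risk estimator and R̂ = n^{−1} Σ_{i=1}^n ℓ(f(S_i)) the ordinary empirical risk. Then for every factorized q, Var_q(Ř) ≤ Var_q(R̂). -/

import Mathlib

open MeasureTheory ProbabilityTheory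

/-- A probability distribution on `ℝ^D` is *factorized* if it is the product of `D`
absolutely continuous marginal distributions on `ℝ`. -/
def IsFactorized {D : ℕ} (q : Measure (Fin D → ℝ)) : Prop :=
  ∃ m : Fin D → Measure ℝ, (∀ d, IsProbabilityMeasure (m d)) ∧
    (∀ d, m d ≪ (volume : Measure ℝ)) ∧ q = Measure.pi m

private lemma card_perm_apply_eq {n : ℕ} (k j : Fin n) :
    Fintype.card {σ : Equiv.Perm (Fin n) // σ k = j} = Nat.factorial (n - 1) := by
  obtain ⟨N, rfl⟩ : ∃ N, n = N + 1 := ⟨n - 1, (Nat.succ_pred_eq_of_pos k.pos).symm⟩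
  have key : ∀ σ : Equiv.Perm (Fin (N + 1)), σ 0 = (Equiv.Perm.decomposeFin σ).1 := by
    intro σ
    nth_rewrite 1 [← Equiv.symm_apply_apply Equiv.Perm.decomposeFin σ]
    exact Equiv.Perm.decomposeFin_symm_apply_zero _ _
  have e₀ : {σ : Equiv.Perm (Fin (N + 1)) // σ k = j}
      ≃ {σ : Equiv.Perm (Fin (N + 1)) // σ 0 = j} :=
    Equiv.subtypeEquiv (Equiv.mulRight (Equiv.swap 0 k)) (fun σ => by
      simp [Equiv.Perm.mul_apply, Equiv.swap_apply_left])
  have e₁ : {σ : Equiv.Perm (Fin (N + 1)) // σ 0 = j}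
      ≃ {x : Fin (N + 1) × Equiv.Perm (Fin N) // x.1 = j} :=
    Equiv.subtypeEquiv Equiv.Perm.decomposeFin (fun σ => by rw [key σ])
  have e₂ : {x : Fin (N + 1) × Equiv.Perm (Fin N) // x.1 = j} ≃ Equiv.Perm (Fin N) :=
    { toFun := fun x => x.1.2
      invFun := fun σ => ⟨(j, σ), rfl⟩
      left_inv := by rintro ⟨⟨a, b⟩, h⟩; cases h; rfl
      right_inv := fun σ => rfl }
  rw [Fintype.card_congr (e₀.trans (e₁.trans e₂)), Fintype.card_perm, Fintype.card_fin]
  simp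

private lemma sum_perm_eval {n D : ℕ} (k : Fin n) (G : (Fin D → Fin n) → ℝ) :
    ∑ π : Fin D → Equiv.Perm (Fin n), G (fun d => π d k)
      = ((Nat.factorial (n - 1) : ℕ) : ℝ) ^ D * ∑ i : Fin D → Fin n, G i := by
  classical
  rw [← Fintype.sum_fiberwise' (fun (π : Fin D → Equiv.Perm (Fin n)) (d : Fin D) => π d k) G,
    Finset.mul_sum]
  refine Finset.sum_congr rfl fun i _ => ?_
  have hcard : Fintype.card {π : Fin D → Equiv.Perm (Fin n) // (fun d => π d k) = i}
      = (Nat.factorial (n - 1)) ^ D := by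
    have e : {π : Fin D → Equiv.Perm (Fin n) // (fun d => π d k) = i}
        ≃ ∀ d, {σ : Equiv.Perm (Fin n) // σ k = i d} :=
      (Equiv.subtypeEquivRight (fun π => funext_iff)).trans (Equiv.subtypePiEquivPi (p := fun d (σ : Equiv.Perm (Fin n)) => σ k = i d))
    rw [Fintype.card_congr e, Fintype.card_pi]
    simp [card_perm_apply_eq]
  rw [Finset.sum_const, Finset.card_univ, hcard, nsmul_eq_mul, Nat.cast_pow]

private lemma variance_map_eq {α β : Type*} [MeasurableSpace α] [MeasurableSpace β]
    (μ : Measure α) (e : α → β) (he : Measurable e) (F : β → ℝ) (hF : Measurable F) :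
    variance F (μ.map e) = variance (F ∘ e) μ := by
  have hI : (μ.map e)[F] = μ[F ∘ e] := integral_map he.aemeasurable hF.aestronglyMeasurable
  unfold ProbabilityTheory.variance ProbabilityTheory.evariance
  rw [hI, lintegral_map (f := fun ω => ‖F ω - μ[F ∘ e]‖ₑ ^ 2) (by fun_prop) he]
  rfl

section main
variable {D n : ℕ}

-- flat-to-matrix map
private lemma map_flat_eq (m : Fin D → Measure ℝ) [∀ d, IsProbabilityMeasure (m d)] :
    (Measure.pi (fun p : Fin n × Fin D => m p.2)).map
        (fun (X : Fin n × Fin D → ℝ) (k : Fin n) (d : Fin D) => X (k, d))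
      = Measure.pi (fun _ : Fin n => Measure.pi m) := by
  have hem : Measurable (fun (X : Fin n × Fin D → ℝ) (k : Fin n) (d : Fin D) => X (k, d)) :=
    measurable_pi_lambda _ fun k => measurable_pi_lambda _ fun d => measurable_pi_apply _
  refine (Measure.pi_eq_generateFrom
    (C := fun _ : Fin n =>
      Set.pi Set.univ '' Set.pi Set.univ (fun _ : Fin D => {s : Set ℝ | MeasurableSet s}))
    (fun _ => generateFrom_pi) (fun _ => IsPiSystem.pi (fun _ => MeasurableSpace.isPiSystem_measurableSet))
    (fun _ => ⟨fun _ => Set.univ,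
      fun _ => ⟨fun _ => Set.univ, fun _ _ => (MeasurableSet.univ : MeasurableSet (Set.univ : Set ℝ)), Set.pi_univ _⟩,
      fun _ => measure_lt_top _ _, Set.iUnion_const _⟩) ?_).symm
  intro s hs
  choose t ht hts using hs
  have hsm : ∀ k, MeasurableSet (s k) := fun k =>
    (hts k) ▸ MeasurableSet.univ_pi (fun d => ht k d (Set.mem_univ d))
  rw [Measure.map_apply hem (MeasurableSet.univ_pi hsm)]
  have hpre : (fun (X : Fin n × Fin D → ℝ) (k : Fin n) (d : Fin D) => X (k, d)) ⁻¹'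
      Set.pi Set.univ s = Set.pi Set.univ (fun p : Fin n × Fin D => t p.1 p.2) := by
    ext X
    constructor
    · intro h p _
      have h1 := h p.1 (Set.mem_univ _)
      rw [← hts p.1] at h1
      exact h1 p.2 (Set.mem_univ _)
    · intro h k _
      rw [← hts k]
      exact fun d _ => h (k, d) (Set.mem_univ _)
  rw [hpre, Measure.pi_pi, Fintype.prod_prod_type]
  exact Finset.prod_congr rfl fun k _ => by rw [← hts k, Measure.pi_pi]

end main

section perm
variable {D n : ℕ}

private def permEquiv (π : Fin D → Equiv.Perm (Fin n)) : (Fin n × Fin D) ≃ (Fin n × Fin D) where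
  toFun p := (π p.2 p.1, p.2)
  invFun p := ((π p.2).symm p.1, p.2)
  left_inv p := by simp
  right_inv p := by simp

private lemma integral_comp_perm (m : Fin D → Measure ℝ) [∀ d, IsProbabilityMeasure (m d)]
    (π : Fin D → Equiv.Perm (Fin n)) (F : (Fin n × Fin D → ℝ) → ℝ) :
    ∫ X, F (X ∘ permEquiv π) ∂(Measure.pi fun p : Fin n × Fin D => m p.2)
      = ∫ X, F X ∂(Measure.pi fun p : Fin n × Fin D => m p.2) := by
  haveI : ∀ p : Fin n × Fin D, SigmaFinite ((fun p : Fin n × Fin D => m p.2) p) :=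
    fun _ => inferInstance
  have h := measurePreserving_piCongrLeft (α := fun _ : Fin n × Fin D => ℝ) (m := fun _ : Fin n × Fin D => (inferInstance : MeasurableSpace ℝ)) (fun p : Fin n × Fin D => m p.2) (permEquiv π).symm
  have hcoe : ⇑(MeasurableEquiv.piCongrLeft (fun _ : Fin n × Fin D => ℝ) (permEquiv π).symm)
      = fun (X : Fin n × Fin D → ℝ) => X ∘ (permEquiv π) := by
    funext X b
    have h1 := MeasurableEquiv.piCongrLeft_apply_apply (β := fun _ : Fin n × Fin D => ℝ) (permEquiv π).symm X (permEquiv π b)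
    rw [Equiv.symm_apply_apply] at h1
    exact h1
  have h2 : MeasurePreserving
      (MeasurableEquiv.piCongrLeft (fun _ : Fin n × Fin D => ℝ) (permEquiv π).symm)
      (Measure.pi fun p : Fin n × Fin D => m p.2)
      (Measure.pi fun p : Fin n × Fin D => m p.2) := h
  have := h2.integral_comp' (f := MeasurableEquiv.piCongrLeft (fun _ : Fin n × Fin D => ℝ)
    (permEquiv π).symm) F
  rw [hcoe] at this
  exact this

end perm

/-- The cross-combination risk estimator has variance no larger than that of the
ordinary empirical risk, for every factorized distribution `q`. -/
theorem stmt1 (D n : ℕ) (hD : 1 ≤ D) (hn : D ≤ n)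
    (Bl : ℝ) (ℓ : (Fin D → ℝ) → ℝ) (hℓm : Measurable ℓ)
    (hℓb : ∀ z, ℓ z ∈ Set.Icc (0 : ℝ) Bl)
    (f : (Fin D → ℝ) → (Fin D → ℝ)) (hfm : Measurable f)
    (hfb : Function.Bijective f) (hfinv : Measurable (Function.invFun f))
    (Rcheck Rhat : (Fin n → Fin D → ℝ) → ℝ)
    (hRcheck : ∀ S : Fin n → Fin D → ℝ,
      Rcheck S = ((n : ℝ) ^ D)⁻¹ *
        ∑ i : Fin D → Fin n, ℓ (f fun d => S (i d) d))
    (hRhat : ∀ S : Fin n → Fin D → ℝ,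
      Rhat S = (n : ℝ)⁻¹ * ∑ i : Fin n, ℓ (f (S i))) :
    ∀ q : Measure (Fin D → ℝ), IsFactorized q →
      variance Rcheck (Measure.pi fun _ : Fin n => q) ≤
        variance Rhat (Measure.pi fun _ : Fin n => q) := by
  rintro q ⟨m, hm, -, rfl⟩
  haveI : ∀ d, IsProbabilityMeasure (m d) := hm
  haveI : ∀ p : Fin n × Fin D, IsProbabilityMeasure ((fun p : Fin n × Fin D => m p.2) p) :=
    fun p => hm p.2
  set Pf : Measure (Fin n × Fin D → ℝ) := Measure.pi (fun p : Fin n × Fin D => m p.2) with hPf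
  haveI : IsProbabilityMeasure Pf := by rw [hPf]; infer_instance
  have hn0 : 0 < n := lt_of_lt_of_le hD hn
  have hnR : (0:ℝ) < n := by exact_mod_cast hn0
  set g : (Fin D → ℝ) → ℝ := fun z => ℓ (f z) with hgdef
  have hgm : Measurable g := hℓm.comp hfm
  have hg0 : ∀ z, 0 ≤ g z := fun z => (hℓb (f z)).1
  have hgB : ∀ z, g z ≤ Bl := fun z => (hℓb (f z)).2
  have hBl0 : 0 ≤ Bl := le_trans (hg0 (fun _ => 0)) (hgB _)
  set Rh : (Fin n × Fin D → ℝ) → ℝ :=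
    fun X => (n:ℝ)⁻¹ * ∑ k : Fin n, g (fun d => X (k, d)) with hRhdef
  set Rc : (Fin n × Fin D → ℝ) → ℝ :=
    fun X => ((n:ℝ)^D)⁻¹ * ∑ i : Fin D → Fin n, g (fun d => X (i d, d)) with hRcdef
  have hRhm : Measurable Rh :=
    (Finset.measurable_sum Finset.univ fun k _ =>
      hgm.comp (measurable_pi_lambda _ fun d => measurable_pi_apply _)).const_mul _
  have hRcm : Measurable Rc :=
    (Finset.measurable_sum Finset.univ fun i _ =>
      hgm.comp (measurable_pi_lambda _ fun d => measurable_pi_apply _)).const_mul _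
  set e : (Fin n × Fin D → ℝ) → (Fin n → Fin D → ℝ) := fun X k d => X (k, d) with hedef
  have hem : Measurable e :=
    measurable_pi_lambda _ fun k => measurable_pi_lambda _ fun d => measurable_pi_apply _
  have hmapP : Pf.map e = Measure.pi (fun _ : Fin n => Measure.pi m) := map_flat_eq m
  have hRcheckm : Measurable Rcheck := by
    have h : Rcheck = fun S => ((n:ℝ)^D)⁻¹ * ∑ i : Fin D → Fin n, g (fun d => S (i d) d) :=
      funext fun S => by rw [hRcheck]
    rw [h]
    exact (Finset.measurable_sum Finset.univ fun i _ =>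
      hgm.comp (measurable_pi_lambda _ fun d =>
        (measurable_pi_apply d).comp (measurable_pi_apply (i d)))).const_mul _
  have hRhatm : Measurable Rhat := by
    have h : Rhat = fun S => (n:ℝ)⁻¹ * ∑ k : Fin n, g (S k) := funext fun S => by rw [hRhat]
    rw [h]
    exact (Finset.measurable_sum Finset.univ fun k _ =>
      hgm.comp (measurable_pi_apply k)).const_mul _
  have hCc : Rcheck ∘ e = Rc := funext fun X => by
    simp only [Function.comp_apply]; rw [hRcheck]
  have hCh : Rhat ∘ e = Rh := funext fun X => by
    simp only [Function.comp_apply]; rw [hRhat]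
  rw [← hmapP, variance_map_eq Pf e hem Rcheck hRcheckm, variance_map_eq Pf e hem Rhat hRhatm,
    hCc, hCh]
  -- helpers
  have hmem : ∀ (F : (Fin n × Fin D → ℝ) → ℝ) (C : ℝ), Measurable F → (∀ X, |F X| ≤ C) →
      MemLp F 2 Pf := fun F C hFm hFb =>
    MemLp.of_bound hFm.aestronglyMeasurable C
      (Filter.Eventually.of_forall fun X => by simpa [Real.norm_eq_abs] using hFb X)
  have hIntOf : ∀ (F : (Fin n × Fin D → ℝ) → ℝ) (C : ℝ), Measurable F → (∀ X, |F X| ≤ C) →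
      Integrable F Pf := fun F C hFm hFb => (hmem F C hFm hFb).integrable one_le_two
  have hRhb : ∀ X, |Rh X| ≤ Bl := by
    intro X
    have h1 : 0 ≤ Rh X :=
      mul_nonneg (inv_nonneg.2 hnR.le) (Finset.sum_nonneg fun k _ => hg0 _)
    have h2 : Rh X ≤ Bl := by
      have hss : ∑ k : Fin n, g (fun d => X (k, d)) ≤ ∑ _k : Fin n, Bl :=
        Finset.sum_le_sum (fun k _ => hgB _)
      calc Rh X ≤ (n:ℝ)⁻¹ * ∑ _k : Fin n, Bl :=
            mul_le_mul_of_nonneg_left hss (inv_nonneg.2 hnR.le)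
        _ = Bl := by
            rw [Finset.sum_const, Finset.card_univ, Fintype.card_fin, nsmul_eq_mul]
            field_simp
    rw [abs_of_nonneg h1]; exact h2
  have hRcb : ∀ X, |Rc X| ≤ Bl := by
    intro X
    have h1 : 0 ≤ Rc X :=
      mul_nonneg (inv_nonneg.2 (by positivity)) (Finset.sum_nonneg fun i _ => hg0 _)
    have h2 : Rc X ≤ Bl := by
      have hss : ∑ i : Fin D → Fin n, g (fun d => X (i d, d)) ≤ ∑ _i : Fin D → Fin n, Bl :=
        Finset.sum_le_sum (fun i _ => hgB _)
      calc Rc X ≤ ((n:ℝ)^D)⁻¹ * ∑ _i : Fin D → Fin n, Bl :=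
            mul_le_mul_of_nonneg_left hss (inv_nonneg.2 (by positivity))
        _ = Bl := by
            rw [Finset.sum_const, Finset.card_univ, Fintype.card_fun, Fintype.card_fin,
              Fintype.card_fin, nsmul_eq_mul]
            push_cast
            field_simp
    rw [abs_of_nonneg h1]; exact h2
  set M : ℝ := ∫ X, Rh X ∂Pf with hM
  set K : ℝ := ((n.factorial : ℕ) : ℝ)^D with hK
  have hK0 : (0:ℝ) < K := pow_pos (by exact_mod_cast n.factorial_pos) D
  have hcardP : ((Fintype.card (Fin D → Equiv.Perm (Fin n))) : ℝ) = K := by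
    simp [hK, Fintype.card_fun, Fintype.card_perm, Fintype.card_fin]
  have hKey : ∀ X, Rc X = K⁻¹ * ∑ π : Fin D → Equiv.Perm (Fin n), Rh (X ∘ permEquiv π) := by
    intro X
    have h1 : ∀ π : Fin D → Equiv.Perm (Fin n),
        Rh (X ∘ permEquiv π) = (n:ℝ)⁻¹ * ∑ k : Fin n, g (fun d => X (π d k, d)) := fun π => rfl
    have h3 : ∀ k : Fin n, ∑ π : Fin D → Equiv.Perm (Fin n), g (fun d => X (π d k, d))
        = ((Nat.factorial (n-1) : ℕ):ℝ)^D * ∑ i : Fin D → Fin n, g (fun d => X (i d, d)) :=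
      fun k => sum_perm_eval k (fun i => g (fun d => X (i d, d)))
    have h2 : ∑ π : Fin D → Equiv.Perm (Fin n), ∑ k : Fin n, g (fun d => X (π d k, d))
        = (n : ℝ) * (((Nat.factorial (n-1) : ℕ):ℝ)^D * ∑ i : Fin D → Fin n, g (fun d => X (i d, d))) := by
      rw [Finset.sum_comm, Finset.sum_congr rfl fun k _ => h3 k, Finset.sum_const,
        Finset.card_univ, Fintype.card_fin, nsmul_eq_mul]
    have hfac : ((n.factorial : ℕ) : ℝ) = (n:ℝ) * ((Nat.factorial (n-1) : ℕ):ℝ) := by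
      exact_mod_cast (Nat.mul_factorial_pred hn0.ne').symm
    have hfacne : ((Nat.factorial (n-1) : ℕ):ℝ) ≠ 0 := by
      exact_mod_cast (Nat.factorial_pos (n-1)).ne'
    calc Rc X = ((n:ℝ)^D)⁻¹ * ∑ i : Fin D → Fin n, g (fun d => X (i d, d)) := rfl
      _ = K⁻¹ * ((n:ℝ)⁻¹ * ∑ π : Fin D → Equiv.Perm (Fin n),
            ∑ k : Fin n, g (fun d => X (π d k, d))) := by
          rw [h2, hK, hfac, mul_pow]
          field_simp
      _ = K⁻¹ * ∑ π : Fin D → Equiv.Perm (Fin n),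
            ((n:ℝ)⁻¹ * ∑ k : Fin n, g (fun d => X (π d k, d))) := by
          rw [Finset.mul_sum]
      _ = K⁻¹ * ∑ π : Fin D → Equiv.Perm (Fin n), Rh (X ∘ permEquiv π) := by
          rw [Finset.sum_congr rfl fun π _ => (h1 π).symm]
  have hIco : ∀ (π : Fin D → Equiv.Perm (Fin n)) (F : (Fin n × Fin D → ℝ) → ℝ),
      ∫ X, F (X ∘ permEquiv π) ∂Pf = ∫ X, F X ∂Pf := fun π F => by
    rw [hPf]; exact integral_comp_perm m π F
  have hUm : ∀ π : Fin D → Equiv.Perm (Fin n),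
      Measurable (fun X : Fin n × Fin D → ℝ => X ∘ permEquiv π) :=
    fun π => measurable_pi_lambda _ fun p => measurable_pi_apply _
  have hcm : ∀ π : Fin D → Equiv.Perm (Fin n),
      Measurable (fun X : Fin n × Fin D → ℝ => Rh (X ∘ permEquiv π) - M) :=
    fun π => (hRhm.comp (hUm π)).sub measurable_const
  have hcb : ∀ (π : Fin D → Equiv.Perm (Fin n)) X, |Rh (X ∘ permEquiv π) - M| ≤ Bl + |M| :=
    fun π X => (abs_sub _ _).trans (add_le_add (hRhb _) le_rfl)
  have hVarRh : variance Rh Pf = ∫ X, (Rh X - M)^2 ∂Pf := by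
    rw [variance_eq_integral (hmem Rh Bl hRhm hRhb).aemeasurable]
  have hIsq : ∀ π : Fin D → Equiv.Perm (Fin n),
      ∫ X, (Rh (X ∘ permEquiv π) - M)^2 ∂Pf = variance Rh Pf := by
    intro π; rw [hVarRh]; exact hIco π (fun Y => (Rh Y - M)^2)
  have hIRhU : ∀ π : Fin D → Equiv.Perm (Fin n), ∫ X, Rh (X ∘ permEquiv π) ∂Pf = M :=
    fun π => (hIco π Rh).trans hM.symm
  have hIntRhU : ∀ π : Fin D → Equiv.Perm (Fin n),
      Integrable (fun X => Rh (X ∘ permEquiv π)) Pf :=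
    fun π => hIntOf _ Bl (hRhm.comp (hUm π)) (fun X => hRhb _)
  have hIRc : ∫ X, Rc X ∂Pf = M := by
    calc ∫ X, Rc X ∂Pf
        = ∫ X, K⁻¹ * ∑ π : Fin D → Equiv.Perm (Fin n), Rh (X ∘ permEquiv π) ∂Pf := by
          simp only [hKey]
      _ = K⁻¹ * ∑ π : Fin D → Equiv.Perm (Fin n), ∫ X, Rh (X ∘ permEquiv π) ∂Pf := by
          rw [integral_const_mul, integral_finset_sum _ (fun π _ => hIntRhU π)]
      _ = K⁻¹ * ∑ _π : Fin D → Equiv.Perm (Fin n), M := by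
          rw [Finset.sum_congr rfl fun π _ => hIRhU π]
      _ = M := by
          rw [Finset.sum_const, Finset.card_univ, nsmul_eq_mul, hcardP]
          field_simp
  have hcent : ∀ X, Rc X - M = K⁻¹ * ∑ π : Fin D → Equiv.Perm (Fin n),
      (Rh (X ∘ permEquiv π) - M) := by
    intro X
    rw [hKey X, Finset.sum_sub_distrib, Finset.sum_const, Finset.card_univ, nsmul_eq_mul,
      hcardP, mul_sub, inv_mul_cancel_left₀ hK0.ne']
  have hVarRc : variance Rc Pf = ∫ X, (Rc X - M)^2 ∂Pf := by
    rw [variance_eq_integral (hmem Rc Bl hRcm hRcb).aemeasurable]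
    simp only [Pi.sub_apply, Pi.pow_apply, hIRc]
  set CB : ℝ := Bl + |M| with hCB
  have hCB0 : 0 ≤ CB := add_nonneg hBl0 (abs_nonneg M)
  have hIntc2 : ∀ π : Fin D → Equiv.Perm (Fin n),
      Integrable (fun X => (Rh (X ∘ permEquiv π) - M)^2) Pf := fun π =>
    hIntOf _ (CB^2) ((hcm π).pow_const 2) (fun X => by
      rw [abs_pow]
      exact pow_le_pow_left₀ (abs_nonneg _) (hcb π X) 2)
  have hIntcc : ∀ π π' : Fin D → Equiv.Perm (Fin n),
      Integrable (fun X => (Rh (X ∘ permEquiv π) - M) * (Rh (X ∘ permEquiv π') - M)) Pf :=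
    fun π π' => hIntOf _ (CB^2) ((hcm π).mul (hcm π')) (fun X => by
      rw [abs_mul, sq]
      exact mul_le_mul (hcb π X) (hcb π' X) (abs_nonneg _) hCB0)
  have hcc : ∀ π π' : Fin D → Equiv.Perm (Fin n),
      ∫ X, (Rh (X ∘ permEquiv π) - M) * (Rh (X ∘ permEquiv π') - M) ∂Pf
        ≤ variance Rh Pf := by
    intro π π'
    have hle : ∀ X, (Rh (X ∘ permEquiv π) - M) * (Rh (X ∘ permEquiv π') - M)
        ≤ ((Rh (X ∘ permEquiv π) - M)^2 + (Rh (X ∘ permEquiv π') - M)^2)/2 := fun X => by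
      nlinarith [sq_nonneg ((Rh (X ∘ permEquiv π) - M) - (Rh (X ∘ permEquiv π') - M))]
    calc ∫ X, (Rh (X ∘ permEquiv π) - M) * (Rh (X ∘ permEquiv π') - M) ∂Pf
        ≤ ∫ X, ((Rh (X ∘ permEquiv π) - M)^2 + (Rh (X ∘ permEquiv π') - M)^2)/2 ∂Pf :=
          integral_mono (hIntcc π π') (((hIntc2 π).add (hIntc2 π')).div_const 2) hle
      _ = (variance Rh Pf + variance Rh Pf)/2 := by
          rw [integral_div, integral_add (hIntc2 π) (hIntc2 π'), hIsq π, hIsq π']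
      _ = variance Rh Pf := by ring
  have hIntSum2 : Integrable
      (fun X => (∑ π : Fin D → Equiv.Perm (Fin n), (Rh (X ∘ permEquiv π) - M))^2) Pf := by
    refine hIntOf _ ((K * CB)^2)
      ((Finset.measurable_sum Finset.univ fun π _ => hcm π).pow_const 2) (fun X => ?_)
    have h1 : |∑ π : Fin D → Equiv.Perm (Fin n), (Rh (X ∘ permEquiv π) - M)| ≤ K * CB := by
      refine (Finset.abs_sum_le_sum_abs _ _).trans ?_
      calc ∑ π : Fin D → Equiv.Perm (Fin n), |Rh (X ∘ permEquiv π) - M|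
          ≤ ∑ _π : Fin D → Equiv.Perm (Fin n), CB := Finset.sum_le_sum fun π _ => hcb π X
        _ = K * CB := by rw [Finset.sum_const, Finset.card_univ, nsmul_eq_mul, hcardP]
    rw [abs_pow]
    exact pow_le_pow_left₀ (abs_nonneg _) h1 2
  have hsum2 : ∫ X, (∑ π : Fin D → Equiv.Perm (Fin n), (Rh (X ∘ permEquiv π) - M))^2 ∂Pf
      ≤ K^2 * variance Rh Pf := by
    have hexp : ∀ X, (∑ π : Fin D → Equiv.Perm (Fin n), (Rh (X ∘ permEquiv π) - M))^2
        = ∑ π : Fin D → Equiv.Perm (Fin n), ∑ π' : Fin D → Equiv.Perm (Fin n),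
            (Rh (X ∘ permEquiv π) - M) * (Rh (X ∘ permEquiv π') - M) := fun X => by
      rw [sq, Finset.sum_mul_sum]
    calc ∫ X, (∑ π : Fin D → Equiv.Perm (Fin n), (Rh (X ∘ permEquiv π) - M))^2 ∂Pf
        = ∑ π : Fin D → Equiv.Perm (Fin n), ∑ π' : Fin D → Equiv.Perm (Fin n),
            ∫ X, (Rh (X ∘ permEquiv π) - M) * (Rh (X ∘ permEquiv π') - M) ∂Pf := by
          simp only [hexp]
          rw [integral_finset_sum _
            (fun π _ => integrable_finset_sum _ (fun π' _ => hIntcc π π'))]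
          exact Finset.sum_congr rfl fun π _ => integral_finset_sum _ (fun π' _ => hIntcc π π')
      _ ≤ ∑ _π : Fin D → Equiv.Perm (Fin n), ∑ _π' : Fin D → Equiv.Perm (Fin n),
            variance Rh Pf :=
          Finset.sum_le_sum fun π _ => Finset.sum_le_sum fun π' _ => hcc π π'
      _ = K^2 * variance Rh Pf := by
          rw [Finset.sum_const, Finset.sum_const, Finset.card_univ, smul_smul, nsmul_eq_mul]
          push_cast [hcardP]
          ring
  calc variance Rc Pf = ∫ X, (Rc X - M)^2 ∂Pf := hVarRc
    _ = ∫ X, (K⁻¹)^2 * (∑ π : Fin D → Equiv.Perm (Fin n), (Rh (X ∘ permEquiv π) - M))^2 ∂Pf := by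
        simp only [hcent, mul_pow]
    _ = (K⁻¹)^2 * ∫ X, (∑ π : Fin D → Equiv.Perm (Fin n), (Rh (X ∘ permEquiv π) - M))^2 ∂Pf :=
        integral_const_mul _ _
    _ ≤ (K⁻¹)^2 * (K^2 * variance Rh Pf) :=
        mul_le_mul_of_nonneg_left hsum2 (by positivity)
    _ = variance Rh Pf := by field_simp
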